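/- Let γ ∈ (0,1], let A_cl ∈ ℝ^{n×n} satisfy ρ(√γ · A_cl) < 1 for the spectral radius ρ, let Q_K ∈ ℝ^{n×n} be positive semidefinite, let Σ ∈ ℝ^{n×n} be positive definite, let c > 0, and let x₀ ∈ ℝ^n satisfy x₀x₀ᵀ ⪯ c·Σ in the Loewner order. Then Σ_{t≥0} γᵗ x₀ᵀ (A_clᵗ)ᵀ Q_K A_clᵗ x₀ ≤ c · Σ_{t≥0} γᵗ trace( (A_clᵗ)ᵀ Q_K A_clᵗ Σ ). -/

import Mathlib

open Matrix

attribute [local instance] Matrix.linftyOpSeminormedAddCommGroup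
  Matrix.linftyOpNormedAddCommGroup Matrix.linftyOpNormedSpace
  Matrix.linftyOpNonUnitalSemiNormedRing Matrix.linftyOpSemiNormedRing
  Matrix.linftyOpNonUnitalNormedRing Matrix.linftyOpNormedRing
  Matrix.linftyOpNormedAlgebra

section helpers

variable {n : ℕ}

/-- Trace of a PSD matrix is nonneg. -/
lemma psd_trace_nonneg (P : Matrix (Fin n) (Fin n) ℝ) (hP : P.PosSemidef) :
    0 ≤ P.trace := by
  rw [Matrix.trace]
  apply Finset.sum_nonneg
  intro i _
  have h := hP.dotProduct_mulVec_nonneg (Pi.single i 1)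
  simpa [dotProduct, Matrix.mulVec, Pi.single_apply, Finset.mul_sum] using h

/-- Trace of a product of PSD real matrices is nonneg. -/
lemma psd_trace_mul_nonneg (M N : Matrix (Fin n) (Fin n) ℝ)
    (hM : M.PosSemidef) (hN : N.PosSemidef) : 0 ≤ (M * N).trace := by
  obtain ⟨B, hB⟩ : ∃ B : Matrix (Fin n) (Fin n) ℝ, M = Bᴴ * B := by
    classical
    open scoped MatrixOrder in
    obtain ⟨X, hX, -, hXX⟩ := CFC.exists_sqrt_of_isSelfAdjoint_of_quasispectrumRestricts
      hM.isHermitian (QuasispectrumRestricts.nnreal_of_nonneg hM.nonneg)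
    exact ⟨X, by rw [← hXX, ← Matrix.star_eq_conjTranspose, hX.star_eq]⟩
  have h1 : (M * N).trace = (B * N * Bᴴ).trace := by
    rw [hB, Matrix.mul_assoc, Matrix.trace_mul_comm]
  rw [h1]
  exact psd_trace_nonneg _ (hN.mul_mul_conjTranspose_same B)

lemma dot_eq_trace (M : Matrix (Fin n) (Fin n) ℝ) (x : Fin n → ℝ) :
    x ⬝ᵥ (M *ᵥ x) = (M * vecMulVec x x).trace := by
  simp only [Matrix.trace, Matrix.diag_apply, Matrix.mul_apply, Matrix.vecMulVec_apply,
    dotProduct, Matrix.mulVec, dotProduct]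
  refine Finset.sum_congr rfl fun i _ => ?_
  rw [Finset.mul_sum]
  exact Finset.sum_congr rfl fun j _ => by ring

/-- Entry bound for the linfty operator norm. -/
lemma entry_le_linfty {α : Type*} [SeminormedAddCommGroup α] (A : Matrix (Fin n) (Fin n) α)
    (i j : Fin n) : ‖A i j‖ ≤ ‖A‖ := by
  have h1 : ‖A i j‖₊ ≤ ‖A‖₊ := by
    rw [Matrix.linfty_opNNNorm_def]
    exact le_trans
      (Finset.single_le_sum (f := fun k => ‖A i k‖₊) (fun k _ => zero_le)
        (Finset.mem_univ j))
      (Finset.le_sup (f := fun i => ∑ j : Fin n, ‖A i j‖₊) (Finset.mem_univ i))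
  exact_mod_cast h1

lemma trace_le_card_norm (A : Matrix (Fin n) (Fin n) ℝ) :
    |A.trace| ≤ n * ‖A‖ := by
  calc |A.trace| ≤ ∑ i : Fin n, |A i i| := by
        rw [Matrix.trace]; exact Finset.abs_sum_le_sum_abs _ _
    _ ≤ ∑ _i : Fin n, ‖A‖ := by
        refine Finset.sum_le_sum fun i _ => ?_
        exact entry_le_linfty A i i
    _ = n * ‖A‖ := by simp [Finset.sum_const]

lemma transpose_norm_le (A : Matrix (Fin n) (Fin n) ℝ) :
    ‖Aᵀ‖ ≤ n * ‖A‖ := by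
  have h1 : ‖Aᵀ‖₊ ≤ n * ‖A‖₊ := by
    rw [Matrix.linfty_opNNNorm_def]
    refine Finset.sup_le fun i _ => ?_
    calc ∑ j : Fin n, ‖Aᵀ i j‖₊ ≤ ∑ _j : Fin n, ‖A‖₊ := by
          refine Finset.sum_le_sum fun j _ => ?_
          have := entry_le_linfty A j i
          have h2 : ‖A j i‖₊ ≤ ‖A‖₊ := by exact_mod_cast this
          simpa [Matrix.transpose_apply] using h2
      _ = n * ‖A‖₊ := by simp [Finset.sum_const, mul_comm]
  calc ‖Aᵀ‖ = (‖Aᵀ‖₊ : ℝ) := rfl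
    _ ≤ ((n * ‖A‖₊ : NNReal) : ℝ) := by exact_mod_cast h1
    _ = n * ‖A‖ := by push_cast; rfl

lemma norm_map_ofReal (A : Matrix (Fin n) (Fin n) ℝ) :
    ‖A.map (Complex.ofReal : ℝ → ℂ)‖ = ‖A‖ := by
  have h : ‖A.map (Complex.ofReal : ℝ → ℂ)‖₊ = ‖A‖₊ := by
    rw [Matrix.linfty_opNNNorm_def, Matrix.linfty_opNNNorm_def]
    refine Finset.sup_congr rfl fun i _ => Finset.sum_congr rfl fun j _ => ?_
    simp [Matrix.map_apply]
  rw [← coe_nnnorm, ← coe_nnnorm, h]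

end helpers

/-- pathwise cost dominated by averaged cost, Proposition 1(i).
If `ρ(√γ A_cl) < 1`, `Q_K ⪰ 0`, `Σ ≻ 0`, `c > 0` and `x₀ x₀ᵀ ⪯ c Σ` in the Loewner
order, then
`Σ_{t≥0} γᵗ x₀ᵀ (A_clᵗ)ᵀ Q_K A_clᵗ x₀ ≤ c Σ_{t≥0} γᵗ trace((A_clᵗ)ᵀ Q_K A_clᵗ Σ)`. -/
theorem stmt_9 {n : ℕ} (γ : ℝ) (hγ0 : 0 < γ) (hγ1 : γ ≤ 1)
    (Acl QK Sig : Matrix (Fin n) (Fin n) ℝ)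
    (hρ : spectralRadius ℂ ((Real.sqrt γ • Acl).map (Complex.ofReal : ℝ → ℂ)) < 1)
    (hQK : QK.PosSemidef) (hSig : Sig.PosDef)
    (c : ℝ) (hc : 0 < c) (x₀ : Fin n → ℝ)
    (hLoewner : (c • Sig - vecMulVec x₀ x₀).PosSemidef) :
    (∑' t : ℕ, γ ^ t * (x₀ ⬝ᵥ (((Acl ^ t)ᵀ * QK * (Acl ^ t)) *ᵥ x₀))) ≤
      c * ∑' t : ℕ, γ ^ t * ((Acl ^ t)ᵀ * QK * (Acl ^ t) * Sig).trace := by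
  classical
  set B : Matrix (Fin n) (Fin n) ℝ := Real.sqrt γ • Acl with hBdef
  set B' : Matrix (Fin n) (Fin n) ℂ := B.map (Complex.ofReal : ℝ → ℂ) with hB'def
  -- the PSD matrices
  set M : ℕ → Matrix (Fin n) (Fin n) ℝ := fun t => (Acl ^ t)ᵀ * QK * (Acl ^ t) with hM
  have hMpsd : ∀ t, (M t).PosSemidef := by
    intro t
    have := hQK.conjTranspose_mul_mul_same (Acl ^ t)
    simpa [hM, Matrix.conjTranspose_eq_transpose_of_trivial] using this
  -- scaled matrices
  have hBt : ∀ t : ℕ, (B ^ t)ᵀ * QK * (B ^ t) = γ ^ t • M t := by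
    intro t
    have h1 : B ^ t = (Real.sqrt γ) ^ t • Acl ^ t := smul_pow _ _ _
    rw [h1, Matrix.transpose_smul, Matrix.smul_mul, Matrix.smul_mul, Matrix.mul_smul,
      smul_smul, ← mul_pow, Real.mul_self_sqrt hγ0.le]
  -- termwise functions
  set a : ℕ → ℝ := fun t => γ ^ t * (x₀ ⬝ᵥ ((M t) *ᵥ x₀)) with ha
  set b : ℕ → ℝ := fun t => γ ^ t * ((M t) * Sig).trace with hb
  -- nonnegativity
  have hb0 : ∀ t, 0 ≤ b t := fun t =>
    mul_nonneg (pow_nonneg hγ0.le t)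
      (psd_trace_mul_nonneg _ _ (hMpsd t) hSig.posSemidef)
  have ha0 : ∀ t, 0 ≤ a t := fun t =>
    mul_nonneg (pow_nonneg hγ0.le t) ((hMpsd t).dotProduct_mulVec_nonneg x₀)
  -- termwise inequality
  have hab : ∀ t, a t ≤ c * b t := by
    intro t
    have key : 0 ≤ ((M t) * (c • Sig - vecMulVec x₀ x₀)).trace :=
      psd_trace_mul_nonneg _ _ (hMpsd t) hLoewner
    have hexp : ((M t) * (c • Sig - vecMulVec x₀ x₀)).trace
        = c * ((M t) * Sig).trace - x₀ ⬝ᵥ ((M t) *ᵥ x₀) := by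
      rw [Matrix.mul_sub, Matrix.trace_sub, Matrix.mul_smul, Matrix.trace_smul,
        dot_eq_trace]
      simp
    rw [hexp] at key
    have h2 : x₀ ⬝ᵥ ((M t) *ᵥ x₀) ≤ c * ((M t) * Sig).trace := by linarith
    have := mul_le_mul_of_nonneg_left h2 (pow_nonneg hγ0.le t)
    calc a t = γ ^ t * (x₀ ⬝ᵥ ((M t) *ᵥ x₀)) := rfl
      _ ≤ γ ^ t * (c * ((M t) * Sig).trace) := this
      _ = c * b t := by rw [hb]; ring
  -- geometric decay of ‖B'^t‖
  obtain ⟨r, hr1, hr2⟩ := ENNReal.lt_iff_exists_nnreal_btwn.mp hρ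
  have hr2' : r < 1 := by exact_mod_cast hr2
  have hgelfand := spectrum.pow_nnnorm_pow_one_div_tendsto_nhds_spectralRadius B'
  have hev : ∀ᶠ t : ℕ in Filter.atTop,
      (‖B' ^ t‖₊ : ENNReal) ^ (1 / (t : ℝ)) < (r : ENNReal) :=
    hgelfand.eventually_lt_const hr1
  have hev2 : ∀ᶠ t : ℕ in Filter.atTop, ‖B' ^ t‖ ≤ (r : ℝ) ^ t := by
    filter_upwards [hev, Filter.eventually_ge_atTop 1] with t ht ht1
    have ht0 : (t : ℝ) ≠ 0 := by positivity
    have h1 : ((‖B' ^ t‖₊ : ENNReal) ^ (1 / (t : ℝ))) ^ (t : ℝ)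
        ≤ ((r : ENNReal)) ^ (t : ℝ) :=
      ENNReal.rpow_le_rpow ht.le (by positivity)
    rw [← ENNReal.rpow_mul, one_div, inv_mul_cancel₀ ht0, ENNReal.rpow_one] at h1
    have h2 : (‖B' ^ t‖₊ : ENNReal) ≤ ((r : ENNReal)) ^ t :=
      h1.trans_eq (ENNReal.rpow_natCast _ t)
    rw [← ENNReal.coe_pow] at h2
    have h3 : ‖B' ^ t‖₊ ≤ r ^ t := by exact_mod_cast h2
    calc ‖B' ^ t‖ = (‖B' ^ t‖₊ : ℝ) := rfl
      _ ≤ ((r ^ t : NNReal) : ℝ) := by exact_mod_cast h3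
      _ = (r : ℝ) ^ t := by push_cast; ring
  -- bound b t by C * ‖B'^t‖^2
  set C : ℝ := (n : ℝ) * ((n : ℝ) * ‖QK‖ * ‖Sig‖) with hC
  have hbound : ∀ t, b t ≤ C * ‖B' ^ t‖ ^ 2 := by
    intro t
    have hBpow : (B ^ t).map (Complex.ofReal : ℝ → ℂ) = B' ^ t := by
      have h := map_pow (Complex.ofRealHom.mapMatrix) B t
      simp only [RingHom.mapMatrix_apply] at h
      rw [hB'def]
      exact h
    have hnorm : ‖B ^ t‖ = ‖B' ^ t‖ := by rw [← hBpow, norm_map_ofReal]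
    have hbt : b t = ((B ^ t)ᵀ * QK * (B ^ t) * Sig).trace := by
      rw [hBt t, Matrix.smul_mul, Matrix.trace_smul, hb, smul_eq_mul]
    have hBnn : (0:ℝ) ≤ ‖B ^ t‖ := norm_nonneg _
    have step : ‖(B ^ t)ᵀ * QK * (B ^ t) * Sig‖
        ≤ ((n : ℝ) * ‖B ^ t‖) * ‖QK‖ * ‖B ^ t‖ * ‖Sig‖ := by
      calc ‖(B ^ t)ᵀ * QK * (B ^ t) * Sig‖
          ≤ ‖(B ^ t)ᵀ * QK * (B ^ t)‖ * ‖Sig‖ := norm_mul_le _ _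
        _ ≤ (‖(B ^ t)ᵀ * QK‖ * ‖B ^ t‖) * ‖Sig‖ := by
            have := norm_mul_le ((B ^ t)ᵀ * QK) (B ^ t)
            exact mul_le_mul_of_nonneg_right this (norm_nonneg _)
        _ ≤ ((‖(B ^ t)ᵀ‖ * ‖QK‖) * ‖B ^ t‖) * ‖Sig‖ := by
            have := norm_mul_le ((B ^ t)ᵀ) QK
            gcongr
        _ ≤ (((n : ℝ) * ‖B ^ t‖ * ‖QK‖) * ‖B ^ t‖) * ‖Sig‖ := by
            have := transpose_norm_le (B ^ t)
            gcongr
        _ = ((n : ℝ) * ‖B ^ t‖) * ‖QK‖ * ‖B ^ t‖ * ‖Sig‖ := by ring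
    have htr : b t ≤ (n : ℝ) * ‖(B ^ t)ᵀ * QK * (B ^ t) * Sig‖ := by
      rw [hbt]
      exact le_trans (le_abs_self _) (trace_le_card_norm _)
    calc b t ≤ (n : ℝ) * ‖(B ^ t)ᵀ * QK * (B ^ t) * Sig‖ := htr
      _ ≤ (n : ℝ) * (((n : ℝ) * ‖B ^ t‖) * ‖QK‖ * ‖B ^ t‖ * ‖Sig‖) := by
          have hn0 : (0:ℝ) ≤ (n : ℝ) := Nat.cast_nonneg n
          exact mul_le_mul_of_nonneg_left step hn0
      _ = C * ‖B ^ t‖ ^ 2 := by rw [hC]; ring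
      _ = C * ‖B' ^ t‖ ^ 2 := by rw [hnorm]
  -- summability of b
  have hCnn : 0 ≤ C := by
    rw [hC]; positivity
  have hgeo : Summable (fun t : ℕ => C * ((r : ℝ) ^ 2) ^ t) :=
    (summable_geometric_of_lt_one (by positivity)
      (by
        have hrR : (r : ℝ) < 1 := by exact_mod_cast hr2'
        nlinarith [r.coe_nonneg])).mul_left C
  have hb_sum : Summable b := by
    apply Summable.of_norm_bounded_eventually hgeo
    rw [Nat.cofinite_eq_atTop]
    filter_upwards [hev2] with t ht
    rw [Real.norm_eq_abs, abs_of_nonneg (hb0 t)]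
    calc b t ≤ C * ‖B' ^ t‖ ^ 2 := hbound t
      _ ≤ C * ((r : ℝ) ^ t) ^ 2 := by
          have h0 : (0:ℝ) ≤ ‖B' ^ t‖ := norm_nonneg _
          have := pow_le_pow_left₀ h0 ht 2
          exact mul_le_mul_of_nonneg_left this hCnn
      _ = C * ((r : ℝ) ^ 2) ^ t := by ring
  -- summability of a
  have hcb_sum : Summable (fun t => c * b t) := hb_sum.mul_left c
  have ha_sum : Summable a := by
    apply Summable.of_norm_bounded_eventually hcb_sum
    filter_upwards with t
    rw [Real.norm_eq_abs, abs_of_nonneg (ha0 t)]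
    exact hab t
  calc (∑' t, a t) ≤ ∑' t, c * b t := ha_sum.tsum_le_tsum hab hcb_sum
    _ = c * ∑' t, b t := tsum_mul_left
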